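/- For i ≠ j, if σ_{i,j}(α) is a fixed point of a nontrivial morphism, then σ_{i,j} is ambiguous with respect to α. -/
import Mathlib


/-- Let Σ be an infinite alphabet, σ : ℕ → S a renaming (injective,
1-uniform), and for i ≠ j let σ_{i,j} map j to σ(i) and every other
variable x to σ(x). If σ_{i,j}(α) is a fixed point of a nontrivial
morphism, then σ_{i,j} is ambiguous with respect to α. -/
theorem stmt_9 (S : Type*) [Infinite S] (σ : ℕ → S)
    (hinj : Function.Injective σ) (i j : ℕ) (hij : i ≠ j) (α : List ℕ)
    (σij : ℕ → List S) (hσij : σij = fun x => if x = j then [σ i] else [σ x])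
    (hfp : ∃ φ : S → List S, (α.flatMap σij).flatMap φ = α.flatMap σij ∧
      ∃ a ∈ α.flatMap σij, φ a ≠ [a]) :
    ∃ τ : ℕ → List S,
      α.flatMap τ = α.flatMap σij ∧ ∃ x ∈ α, τ x ≠ σij x := by
  obtain ⟨φ, hφ, a, ha, hane⟩ := hfp
  refine ⟨fun x => (σij x).flatMap φ, ?_, ?_⟩
  · rw [← hφ, List.flatMap_assoc]
  · rw [List.mem_flatMap] at ha
    obtain ⟨x, hx, hax⟩ := ha
    refine ⟨x, hx, ?_⟩
    have hsingle : σij x = [a] := by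
      subst hσij
      simp only at hax ⊢
      split at hax <;> simp_all
    simp only [hsingle, List.flatMap_cons, List.flatMap_nil, List.append_nil]
    exact hane
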